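/- Let n ≥ 1 and let s = (s_1, ..., s_n) be a sequence of positive integers with s_i ≥ s_{i+1} for i = 1, ..., n-1 and s_1 ≤ n-1. If the sequence s' = (s_2 - 1, s_3 - 1, ..., s_{s_1+1} - 1, s_{s_1+2}, ..., s_n) of length n-1 is graphic and s_1 + s_2 + ... + s_n ≥ 2(n-1), then s is connected and graphic. -/

import Mathlib

set_option linter.unusedSectionVars false
open Finset SimpleGraph

namespace ConnGraphicAux

attribute [local instance] Classical.propDecidable

variable {V : Type*} [Fintype V] [DecidableEq V]

lemma reach_of_adj_reach {G H : SimpleGraph V} (h : ∀ x y, G.Adj x y → H.Reachable x y)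
    {x y : V} (hr : G.Reachable x y) : H.Reachable x y := by
  obtain ⟨w⟩ := hr
  induction w with
  | nil => exact Reachable.refl _
  | cons hadj _ ih => exact (h _ _ hadj).trans ih

lemma reach_avoid {G : SimpleGraph V} {c d : V} {a b : V} (w : G.Walk a b)
    (hc : ¬ G.Reachable a c) (hd : ¬ G.Reachable a d) :
    (G.deleteEdges {s(c,d)}).Reachable a b := by
  induction w with
  | nil => exact Reachable.refl _
  | @cons u v w hadj p ih =>
      have huc : u ≠ c := fun h => hc (h ▸ Reachable.refl _)
      have hud : u ≠ d := fun h => hd (h ▸ Reachable.refl _)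
      have h1 : (G.deleteEdges {s(c,d)}).Adj u v := by
        rw [SimpleGraph.deleteEdges_adj]
        refine ⟨hadj, ?_⟩
        simp only [Set.mem_singleton_iff, Sym2.eq_iff]
        rintro (⟨rfl, rfl⟩|⟨rfl, rfl⟩)
        · exact huc rfl
        · exact hud rfl
      exact h1.reachable.trans
        (ih (fun h => hc (hadj.reachable.trans h)) (fun h => hd (hadj.reachable.trans h)))

lemma forest_bound (m : ℕ) : ∀ (G : SimpleGraph V), G.edgeSet.ncard = m → G.IsAcyclic →
    m + Fintype.card G.ConnectedComponent ≤ Fintype.card V := by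
  induction m using Nat.strong_induction_on with
  | _ m ih =>
    intro G hm hac
    rcases Nat.eq_zero_or_pos m with rfl | hm0
    · simpa using Fintype.card_le_of_surjective G.connectedComponentMk
        (fun C => C.exists_rep)
    · have hne : G.edgeSet.Nonempty := by
        exact Set.nonempty_of_ncard_ne_zero (by omega)
      obtain ⟨e, he⟩ := hne
      revert he
      induction e using Sym2.ind with
      | _ a b =>
        intro he
        have hab : G.Adj a b := he
        set G' := G.deleteEdges {s(a,b)} with hG'
        have hle : G' ≤ G := deleteEdges_le _
        have hbridge : G.IsBridge s(a,b) :=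
          (isAcyclic_iff_forall_edge_isBridge.mp hac) he
        have hnr : ¬ G'.Reachable a b := hbridge
        have hacyclic' : G'.IsAcyclic := fun v c hc => hac (c.mapLe hle) (hc.mapLe hle)
        have hcard : G'.edgeSet.ncard = m - 1 := by
          rw [hG', edgeSet_deleteEdges, Set.ncard_diff_singleton_of_mem he, hm]
        have hsurj : Function.Surjective
            (ConnectedComponent.map (Hom.ofLE hle)) := by
          intro C
          obtain ⟨v, rfl⟩ := C.exists_rep
          exact ⟨G'.connectedComponentMk v, rfl⟩
        have hninj : ¬ Function.Injective
            (ConnectedComponent.map (Hom.ofLE hle)) := by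
          intro hinj
          have : G'.connectedComponentMk a = G'.connectedComponentMk b := by
            apply hinj
            simp only [ConnectedComponent.map_mk]
            exact ConnectedComponent.eq.mpr hab.reachable
          exact hnr (ConnectedComponent.eq.mp this)
        have hlt : Fintype.card G.ConnectedComponent < Fintype.card G'.ConnectedComponent :=
          Fintype.card_lt_of_surjective_not_injective _ hsurj hninj
        have := ih (m-1) (by omega) G' hcard hacyclic'
        simp only [Fintype.card_eq_nat_card] at this hlt ⊢
        omega

def swapGraph (G : SimpleGraph V) (a b c d : V) : SimpleGraph V where
  Adj x y := x ≠ y ∧ ((G.Adj x y ∧ s(x,y) ≠ s(a,b) ∧ s(x,y) ≠ s(c,d)) ∨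
    s(x,y) = s(a,c) ∨ s(x,y) = s(b,d))
  symm := ⟨by
    rintro x y ⟨hne, h⟩
    refine ⟨hne.symm, ?_⟩
    rw [Sym2.eq_swap (a := y) (b := x), G.adj_comm]
    exact h⟩
  loopless := ⟨fun x h => h.1 rfl⟩

lemma swapGraph_adj {G : SimpleGraph V} {a b c d x y : V} :
    (swapGraph G a b c d).Adj x y ↔ x ≠ y ∧ ((G.Adj x y ∧ s(x,y) ≠ s(a,b) ∧ s(x,y) ≠ s(c,d)) ∨
      s(x,y) = s(a,c) ∨ s(x,y) = s(b,d)) := Iff.rfl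

lemma swapGraph_comm1 (G : SimpleGraph V) (a b c d : V) :
    swapGraph G a b c d = swapGraph G b a d c := by
  ext x y
  rw [swapGraph_adj, swapGraph_adj, Sym2.eq_swap (a := b) (b := a),
    Sym2.eq_swap (a := d) (b := c)]
  tauto

lemma swapGraph_comm2 (G : SimpleGraph V) (a b c d : V) :
    swapGraph G a b c d = swapGraph G c d a b := by
  ext x y
  rw [swapGraph_adj, swapGraph_adj, Sym2.eq_swap (a := c) (b := a),
    Sym2.eq_swap (a := d) (b := b)]
  tauto

lemma swap_neighborFinset_a {G : SimpleGraph V} {a b c d : V} [DecidableRel G.Adj]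
    [DecidableRel (swapGraph G a b c d).Adj]
    (hab : G.Adj a b) (hcd : G.Adj c d)
    (hac : a ≠ c) (had : a ≠ d) :
    (swapGraph G a b c d).neighborFinset a = insert c ((G.neighborFinset a).erase b) := by
  have hab' : a ≠ b := hab.ne
  ext y
  simp only [mem_neighborFinset, Finset.mem_insert, Finset.mem_erase]
  rw [swapGraph_adj]
  constructor
  · rintro ⟨hne, (⟨hGay, h1, _⟩ | h3 | h4)⟩
    · refine Or.inr ⟨fun hyb => h1 ?_, hGay⟩
      rw [hyb]
    · rw [Sym2.eq_iff] at h3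
      rcases h3 with ⟨-, rfl⟩ | ⟨h, -⟩
      · exact Or.inl rfl
      · exact absurd h hac
    · rw [Sym2.eq_iff] at h4
      rcases h4 with ⟨h, -⟩ | ⟨h, -⟩
      · exact absurd h hab'
      · exact absurd h had
  · rintro (rfl | ⟨hyb, hGay⟩)
    · exact ⟨hac, Or.inr (Or.inl (by rw [Sym2.eq_iff]; exact Or.inl ⟨rfl, rfl⟩))⟩
    · refine ⟨hGay.ne, Or.inl ⟨hGay, ?_, ?_⟩⟩
      · intro h; rw [Sym2.eq_iff] at h
        rcases h with ⟨-, h⟩|⟨h, -⟩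
        · exact hyb h
        · exact hab' h
      · intro h; rw [Sym2.eq_iff] at h
        rcases h with ⟨h, -⟩|⟨h, -⟩
        · exact hac h
        · exact had h

lemma swap_degree_a {G : SimpleGraph V} {a b c d : V} [DecidableRel G.Adj]
    [DecidableRel (swapGraph G a b c d).Adj]
    (hab : G.Adj a b) (hcd : G.Adj c d) (hnac : ¬ G.Adj a c)
    (hac : a ≠ c) (had : a ≠ d) :
    (swapGraph G a b c d).degree a = G.degree a := by
  rw [← card_neighborFinset_eq_degree, ← card_neighborFinset_eq_degree,
    swap_neighborFinset_a hab hcd hac had]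
  rw [Finset.card_insert_of_notMem (by
    simp only [Finset.mem_erase, mem_neighborFinset]
    rintro ⟨-, h⟩; exact hnac h)]
  rw [Finset.card_erase_of_mem (by simpa using hab)]
  have : 0 < (G.neighborFinset a).card := Finset.card_pos.mpr ⟨b, by simpa using hab⟩
  omega

lemma swap_neighborFinset_other {G : SimpleGraph V} {a b c d x : V} [DecidableRel G.Adj]
    [DecidableRel (swapGraph G a b c d).Adj]
    (hxa : x ≠ a) (hxb : x ≠ b) (hxc : x ≠ c) (hxd : x ≠ d) :
    (swapGraph G a b c d).neighborFinset x = G.neighborFinset x := by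
  ext y
  simp only [mem_neighborFinset]
  rw [swapGraph_adj]
  constructor
  · rintro ⟨hne, (⟨hGxy, -, -⟩ | h3 | h4)⟩
    · exact hGxy
    · rw [Sym2.eq_iff] at h3
      rcases h3 with ⟨h, -⟩ | ⟨h, -⟩
      · exact absurd h hxa
      · exact absurd h hxc
    · rw [Sym2.eq_iff] at h4
      rcases h4 with ⟨h, -⟩ | ⟨h, -⟩
      · exact absurd h hxb
      · exact absurd h hxd
  · intro hGxy
    refine ⟨hGxy.ne, Or.inl ⟨hGxy, ?_, ?_⟩⟩
    · intro h; rw [Sym2.eq_iff] at h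
      rcases h with ⟨h, -⟩|⟨h, -⟩
      · exact hxa h
      · exact hxb h
    · intro h; rw [Sym2.eq_iff] at h
      rcases h with ⟨h, -⟩|⟨h, -⟩
      · exact hxc h
      · exact hxd h

lemma degree_congr {G H : SimpleGraph V} [DecidableRel G.Adj] [DecidableRel H.Adj]
    (h : G = H) (v : V) : G.degree v = H.degree v := by
  rw [← card_neighborFinset_eq_degree, ← card_neighborFinset_eq_degree]
  congr 1
  ext y
  simp only [mem_neighborFinset, h]

lemma swap_degree {G : SimpleGraph V} {a b c d : V} [DecidableRel G.Adj]
    [DecidableRel (swapGraph G a b c d).Adj]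
    (hab : G.Adj a b) (hcd : G.Adj c d) (hnac : ¬ G.Adj a c) (hnbd : ¬ G.Adj b d)
    (hac : a ≠ c) (had : a ≠ d) (hbc : b ≠ c) (hbd : b ≠ d) (x : V) :
    (swapGraph G a b c d).degree x = G.degree x := by
  classical
  by_cases hxa : x = a
  · subst hxa; exact swap_degree_a hab hcd hnac hac had
  by_cases hxb : x = b
  · rw [hxb]
    rw [degree_congr (swapGraph_comm1 G a b c d) b]
    exact swap_degree_a hab.symm hcd.symm hnbd hbd hbc
  by_cases hxc : x = c
  · rw [hxc]
    rw [degree_congr (swapGraph_comm2 G a b c d) c]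
    exact swap_degree_a hcd hab (fun h => hnac h.symm) (Ne.symm hac) (Ne.symm hbc)
  by_cases hxd : x = d
  · rw [hxd]
    rw [degree_congr (by rw [swapGraph_comm1, swapGraph_comm2] :
      swapGraph G a b c d = swapGraph G d c b a) d]
    exact swap_degree_a hcd.symm hab.symm (fun h => hnbd h.symm) (Ne.symm hbd) (Ne.symm had)
  · rw [← card_neighborFinset_eq_degree, ← card_neighborFinset_eq_degree,
      swap_neighborFinset_other hxa hxb hxc hxd]

noncomputable def rc (G : SimpleGraph V) : ℕ :=
  (Finset.univ.filter fun p : V × V => G.Reachable p.1 p.2).card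

lemma exists_connected [Nonempty V] (s : V → ℕ) (hpos : ∀ i, 0 < s i)
    (hsum : 2 * (Fintype.card V - 1) ≤ ∑ i, s i) :
    ∀ (k : ℕ), ∀ (G : SimpleGraph V), (∀ i, G.degree i = s i) →
      Fintype.card V * Fintype.card V ≤ rc G + k →
      ∃ (G' : SimpleGraph V) (_ : DecidableRel G'.Adj),
        G'.Connected ∧ ∀ i, G'.degree i = s i := by
  intro k
  induction k with
  | zero =>
    intro G hdeg hk
    refine ⟨G, inferInstance, ?_, hdeg⟩
    have hle : rc G ≤ Fintype.card V * Fintype.card V := by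
      calc rc G ≤ (Finset.univ : Finset (V × V)).card := Finset.card_filter_le _ _
      _ = _ := by rw [Finset.card_univ, Fintype.card_prod]
    have hcard : (Finset.univ.filter fun p : V × V => G.Reachable p.1 p.2).card
        = (Finset.univ : Finset (V × V)).card := by
      rw [Finset.card_univ, Fintype.card_prod]
      simp only [rc] at hle hk
      omega
    have huniv := Finset.eq_univ_of_card _ hcard
    have hpre : G.Preconnected := by
      intro u v
      have : (u, v) ∈ Finset.univ.filter fun p : V × V => G.Reachable p.1 p.2 := by
        rw [huniv]; exact Finset.mem_univ _
      exact (Finset.mem_filter.mp this).2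
    exact SimpleGraph.Connected.mk hpre
  | succ k ih =>
    intro G hdeg hk
    by_cases hconn : G.Connected
    · exact ⟨G, inferInstance, hconn, hdeg⟩
    -- G is disconnected: find unreachable pair
    rw [SimpleGraph.connected_iff] at hconn
    push_neg at hconn
    have hpre : ¬ G.Preconnected := fun h => by haveI := hconn h; exact IsEmpty.false (Classical.choice ‹Nonempty V›)
    rw [SimpleGraph.Preconnected] at hpre
    push_neg at hpre
    obtain ⟨u, v, hnr⟩ := hpre
    have huv : u ≠ v := fun h => hnr (h ▸ Reachable.refl u)
    have hV2 : 2 ≤ Fintype.card V := Fintype.one_lt_card_iff_nontrivial.mpr ⟨u, v, huv⟩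
    -- edge count
    have hedge : Fintype.card V - 1 ≤ G.edgeFinset.card := by
      have h1 : ∑ i, G.degree i = 2 * G.edgeFinset.card :=
        SimpleGraph.sum_degrees_eq_twice_card_edges G
      have h2 : ∑ i, G.degree i = ∑ i, s i := Finset.sum_congr rfl fun i _ => hdeg i
      omega
    have hefc : G.edgeFinset.card = G.edgeSet.ncard :=
      (Set.ncard_eq_toFinset_card' _).symm
    -- there is a non-bridge edge
    have hnball : ¬ ∀ e ∈ G.edgeSet, G.IsBridge e := by
      intro hall
      have hac : G.IsAcyclic := isAcyclic_iff_forall_edge_isBridge.mpr hall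
      have hfb := forest_bound G.edgeSet.ncard G rfl hac
      have hcomp : 2 ≤ Fintype.card G.ConnectedComponent :=
        Fintype.one_lt_card_iff_nontrivial.mpr
          ⟨G.connectedComponentMk u, G.connectedComponentMk v,
            fun h => hnr (SimpleGraph.ConnectedComponent.eq.mp h)⟩
      omega
    push_neg at hnball
    obtain ⟨e, he, hnb⟩ := hnball
    revert he hnb
    induction e using Sym2.ind with
    | _ a b =>
    intro he hnb
    have hab : G.Adj a b := he
    have hR : (G.deleteEdges {s(a,b)}).Reachable a b := by
      by_contra h
      exact hnb h
    -- choose c0 in another component, with a neighbor d0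
    obtain ⟨c0, hac0⟩ : ∃ c0, ¬ G.Reachable a c0 := by
      by_cases hau : G.Reachable a u
      · exact ⟨v, fun h => hnr (hau.symm.trans h)⟩
      · exact ⟨u, hau⟩
    obtain ⟨d0, hc0d0⟩ : ∃ d0, G.Adj c0 d0 := by
      rw [← SimpleGraph.degree_pos_iff_exists_adj]
      rw [hdeg c0]; exact hpos c0
    have had0 : ¬ G.Reachable a d0 := fun h => hac0 (h.trans hc0d0.symm.reachable)
    have hbc0 : ¬ G.Reachable b c0 := fun h => hac0 (hab.reachable.trans h)
    have hbd0 : ¬ G.Reachable b d0 := fun h => had0 (hab.reachable.trans h)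
    have hac' : a ≠ c0 := fun h => hac0 (h ▸ Reachable.refl a)
    have had' : a ≠ d0 := fun h => had0 (h ▸ Reachable.refl a)
    have hbc' : b ≠ c0 := fun h => hbc0 (h ▸ Reachable.refl b)
    have hbd' : b ≠ d0 := fun h => hbd0 (h ▸ Reachable.refl b)
    have hnac : ¬ G.Adj a c0 := fun h => hac0 h.reachable
    have hnbd : ¬ G.Adj b d0 := fun h => hbd0 h.reachable
    set G2 := swapGraph G a b c0 d0 with hG2
    have hdeg2 : ∀ i, G2.degree i = s i := by
      intro i
      rw [hG2, swap_degree hab hc0d0 hnac hnbd hac' had' hbc' hbd' i]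
      exact hdeg i
    -- Reachability in G2 of a and b
    have hle2 : (G.deleteEdges {s(a,b)}).deleteEdges {s(c0,d0)} ≤ G2 := by
      intro x y h
      simp only [SimpleGraph.deleteEdges_adj, Set.mem_singleton_iff] at h
      exact ⟨h.1.1.ne, Or.inl ⟨h.1.1, h.1.2, h.2⟩⟩
    have hRab : G2.Reachable a b := by
      obtain ⟨w⟩ := hR
      refine (reach_avoid w ?_ ?_).mono hle2
      · exact fun h => hac0 (h.mono (SimpleGraph.deleteEdges_le _))
      · exact fun h => had0 (h.mono (SimpleGraph.deleteEdges_le _))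
    have hkey : ∀ x y, G.Adj x y → G2.Reachable x y := by
      intro x y hxy
      by_cases h1 : s(x,y) = s(a,b)
      · rw [Sym2.eq_iff] at h1
        rcases h1 with ⟨rfl, rfl⟩ | ⟨rfl, rfl⟩
        · exact hRab
        · exact hRab.symm
      by_cases h2 : s(x,y) = s(c0,d0)
      · have e1 : G2.Adj c0 a := ⟨Ne.symm hac', Or.inr (Or.inl Sym2.eq_swap)⟩
        have e2 : G2.Adj b d0 := ⟨hbd', Or.inr (Or.inr rfl)⟩
        have hRcd : G2.Reachable c0 d0 := e1.reachable.trans (hRab.trans e2.reachable)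
        rw [Sym2.eq_iff] at h2
        rcases h2 with ⟨rfl, rfl⟩ | ⟨rfl, rfl⟩
        · exact hRcd
        · exact hRcd.symm
      · exact SimpleGraph.Adj.reachable ⟨hxy.ne, Or.inl ⟨hxy, h1, h2⟩⟩
    have hsub : (Finset.univ.filter fun p : V × V => G.Reachable p.1 p.2) ⊆
        (Finset.univ.filter fun p : V × V => G2.Reachable p.1 p.2) := by
      intro p hp
      rw [Finset.mem_filter] at hp ⊢
      exact ⟨hp.1, reach_of_adj_reach hkey hp.2⟩
    have hnew : (a, c0) ∈ (Finset.univ.filter fun p : V × V => G2.Reachable p.1 p.2) := by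
      rw [Finset.mem_filter]
      exact ⟨Finset.mem_univ _, (SimpleGraph.Adj.reachable ⟨hac', Or.inr (Or.inl rfl)⟩)⟩
    have hold : (a, c0) ∉ (Finset.univ.filter fun p : V × V => G.Reachable p.1 p.2) := by
      rw [Finset.mem_filter]
      exact fun h => hac0 h.2
    have hlt : rc G < rc G2 := by
      apply Finset.card_lt_card
      exact ⟨hsub, fun h => hold (h hnew)⟩
    exact ih G2 hdeg2 (by omega)

def addVertex (n : ℕ) (hn : 1 ≤ n) (G' : SimpleGraph (Fin (n-1))) (t : ℕ) :
    SimpleGraph (Fin n) where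
  Adj x y := x ≠ y ∧ ((x.val = 0 ∧ y.val ≤ t) ∨ (y.val = 0 ∧ x.val ≤ t) ∨
    (∃ i j : Fin (n-1), x.val = i.val + 1 ∧ y.val = j.val + 1 ∧ G'.Adj i j))
  symm := ⟨by
    rintro x y ⟨hne, h⟩
    refine ⟨hne.symm, ?_⟩
    rcases h with h | h | ⟨i, j, hi, hj, hadj⟩
    · exact Or.inr (Or.inl h)
    · exact Or.inl h
    · exact Or.inr (Or.inr ⟨j, i, hj, hi, hadj.symm⟩)⟩
  loopless := ⟨fun x h => h.1 rfl⟩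

lemma addVertex_degree_zero {n : ℕ} (hn : 1 ≤ n) (G' : SimpleGraph (Fin (n-1))) {t : ℕ}
    (ht : t ≤ n - 1) :
    (addVertex n hn G' t).degree ⟨0, hn⟩ = t := by
  classical
  rw [← card_neighborFinset_eq_degree]
  have hset : (addVertex n hn G' t).neighborFinset ⟨0, hn⟩ =
      Finset.univ.filter (fun y : Fin n => 1 ≤ y.val ∧ y.val ≤ t) := by
    ext y
    simp only [mem_neighborFinset, Finset.mem_filter, Finset.mem_univ, true_and]
    constructor
    · rintro ⟨hne, h | h | ⟨i, j, hi, -, -⟩⟩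
      · have h0 : y.val ≠ 0 := fun hy => hne (Fin.ext (by simp [hy]))
        exact ⟨by omega, h.2⟩
      · exact absurd (Fin.ext (by simp [h.1]) : (⟨0, hn⟩ : Fin n) = y) hne
      · simp at hi
    · rintro ⟨h1, h2⟩
      refine ⟨fun h => ?_, Or.inl ⟨rfl, h2⟩⟩
      have := congrArg Fin.val h
      simp at this
      omega
  rw [hset]
  have hcount : (Finset.univ.filter (fun y : Fin n => 1 ≤ y.val ∧ y.val ≤ t)).card
      = (Finset.Icc 1 t).card := by
    refine Finset.card_bij' (fun y _ => y.val)
      (fun m hm => (⟨m, by simp only [Finset.mem_Icc] at hm; omega⟩ : Fin n)) ?_ ?_ ?_ ?_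
    · intro y hy
      simp only [Finset.mem_filter] at hy
      simp only [Finset.mem_Icc]
      omega
    · intro m hm
      simp only [Finset.mem_Icc] at hm
      simp only [Finset.mem_filter, Finset.mem_univ, true_and]
      omega
    · intro y hy; rfl
    · intro m hm; rfl
  rw [hcount, Nat.card_Icc]
  omega

lemma addVertex_degree_succ {n : ℕ} (hn : 1 ≤ n) (G' : SimpleGraph (Fin (n-1)))
    [DecidableRel G'.Adj] {t : ℕ} (j : Fin (n-1)) :
    (addVertex n hn G' t).degree ⟨j.val + 1, by omega⟩ =
      G'.degree j + (if j.val + 1 ≤ t then 1 else 0) := by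
  classical
  rw [← card_neighborFinset_eq_degree]
  set x : Fin n := ⟨j.val + 1, by omega⟩ with hx
  set S : Finset (Fin n) := (G'.neighborFinset j).image
    (fun i : Fin (n-1) => (⟨i.val + 1, by omega⟩ : Fin n)) with hS
  have hScard : S.card = G'.degree j := by
    rw [hS, Finset.card_image_of_injective _ (fun i i' h => by
      apply Fin.ext
      have h2 : i.val + 1 = i'.val + 1 := congrArg Fin.val h
      omega), card_neighborFinset_eq_degree]
  have hzS : (⟨0, hn⟩ : Fin n) ∉ S := by
    rw [hS]
    simp only [Finset.mem_image]
    rintro ⟨i, -, h⟩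
    have := congrArg Fin.val h
    simp at this
  have hset : (addVertex n hn G' t).neighborFinset x =
      if j.val + 1 ≤ t then insert ⟨0, hn⟩ S else S := by
    ext y
    have hmemS : y ∈ S ↔ ∃ i : Fin (n-1), y.val = i.val + 1 ∧ G'.Adj j i := by
      rw [hS]
      simp only [Finset.mem_image, mem_neighborFinset]
      constructor
      · rintro ⟨i, hi, rfl⟩
        exact ⟨i, rfl, hi⟩
      · rintro ⟨i, hy, hadj⟩
        exact ⟨i, hadj, Fin.ext hy.symm⟩
    simp only [mem_neighborFinset]
    constructor
    · rintro ⟨hne, h | ⟨hy0, hxt⟩ | ⟨i, i', hi, hi', hadj⟩⟩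
      · rw [hx] at h; exact absurd h.1 (by simp)
      · have hyz : y = ⟨0, hn⟩ := Fin.ext hy0
        rw [hx] at hxt
        simp only at hxt
        rw [if_pos hxt]
        rw [hyz]; exact Finset.mem_insert_self _ _
      · have hij : i = j := by
          apply Fin.ext
          rw [hx] at hi
          simp only at hi
          omega
        have hyS : y ∈ S := hmemS.mpr ⟨i', hi', hij ▸ hadj⟩
        split_ifs
        · exact Finset.mem_insert_of_mem hyS
        · exact hyS
    · intro hy
      have hcase : y = ⟨0, hn⟩ ∧ j.val + 1 ≤ t ∨ y ∈ S := by
        split_ifs at hy with hcond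
        · rcases Finset.mem_insert.mp hy with rfl | h
          · exact Or.inl ⟨rfl, hcond⟩
          · exact Or.inr h
        · exact Or.inr hy
      rcases hcase with ⟨rfl, hcond⟩ | hyS
      · refine ⟨fun h => by simpa [hx] using congrArg Fin.val h.symm, ?_⟩
        exact Or.inr (Or.inl ⟨rfl, by simpa [hx] using hcond⟩)
      · obtain ⟨i, hyv, hadj⟩ := hmemS.mp hyS
        refine ⟨fun h => ?_, Or.inr (Or.inr ⟨j, i, by simp [hx], hyv, hadj⟩)⟩
        have hxy : x.val = y.val := congrArg Fin.val h
        rw [hyv, hx] at hxy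
        simp only at hxy
        have hji : j = i := Fin.ext (by omega)
        exact G'.irrefl (hji ▸ hadj)
  rw [hset]
  split_ifs with hcond
  · rw [Finset.card_insert_of_notMem hzS, hScard]
  · rw [hScard]
    omega

end ConnGraphicAux

/-- A sequence `s` of length `n` is graphic if it is the degree sequence of a
finite simple graph on `n` vertices. -/
def Graphic (n : ℕ) (s : Fin n → ℕ) : Prop :=
  ∃ G : SimpleGraph (Fin n), ∃ _ : DecidableRel G.Adj, ∀ i, G.degree i = s i

/-- A sequence `s` is connected and graphic if it is the degree sequence of a
connected finite simple graph on `n` vertices. -/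
def ConnectedGraphic (n : ℕ) (s : Fin n → ℕ) : Prop :=
  ∃ G : SimpleGraph (Fin n), ∃ _ : DecidableRel G.Adj,
    G.Connected ∧ ∀ i, G.degree i = s i

theorem connected_graphic_mpr (n : ℕ) (hn : 1 ≤ n) (s : Fin n → ℕ)
    (hpos : ∀ i, 0 < s i) (hmono : Antitone s)
    (hmax : s ⟨0, hn⟩ ≤ n - 1)
    (s' : Fin (n - 1) → ℕ)
    (hs' : ∀ j : Fin (n - 1),
      s' j = if j.val + 1 ≤ s ⟨0, hn⟩
             then s ⟨j.val + 1, by omega⟩ - 1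
             else s ⟨j.val + 1, by omega⟩) :
    Graphic (n - 1) s' ∧ 2 * (n - 1) ≤ ∑ i, s i → ConnectedGraphic n s := by
  rintro ⟨⟨G', dec', hdeg'⟩, hsum⟩
  classical
  rcases Nat.lt_or_ge n 2 with h2 | h2
  · exfalso
    have h1 : n = 1 := by omega
    have := hpos ⟨0, hn⟩
    omega
  set z : Fin n := ⟨0, hn⟩ with hz
  have hdeg'c : ∀ jj : Fin (n-1), G'.degree jj = s' jj := by
    intro jj
    rw [← hdeg' jj]
    try congr 1
    try exact Subsingleton.elim _ _
  set G0 := ConnGraphicAux.addVertex n hn G' (s z) with hG0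
  have hdeg0 : ∀ i, G0.degree i = s i := by
    intro i
    rcases Nat.eq_zero_or_pos i.val with h0 | h0
    · have hiz : i = z := Fin.ext h0
      rw [hiz, hG0, ConnGraphicAux.addVertex_degree_zero hn G' hmax]
    · set j : Fin (n-1) := ⟨i.val - 1, by omega⟩ with hj
      have hi : i = ⟨j.val + 1, by omega⟩ := Fin.ext (by simp [hj]; omega)
      rw [hi, hG0, ConnGraphicAux.addVertex_degree_succ hn G' j]
      rw [hdeg'c j, hs' j]
      have hps := hpos (⟨j.val + 1, by omega⟩ : Fin n)
      split_ifs with hc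
      · omega
      · omega
  have hNE : Nonempty (Fin n) := ⟨z⟩
  have hsum' : 2 * (Fintype.card (Fin n) - 1) ≤ ∑ i, s i := by
    rw [Fintype.card_fin]; exact hsum
  obtain ⟨Gc, instc, hconn, hdegc⟩ :=
    ConnGraphicAux.exists_connected s hpos hsum' (n*n) G0 hdeg0
      (by rw [Fintype.card_fin]; omega)
  exact ⟨Gc, instc, hconn, hdegc⟩
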